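/- Let 𝒪 = ℂ[[t]] and fix a partition n = n_1+...+n_k with associated sequence m_0 ≤ ... ≤ m_{n-1} (nondecreasing rearrangement of {1,...,n_1, ..., 1,...,n_k}). For arbitrary f_0, f_1, ..., f_{n-1} ∈ 𝒪, let ε_1,...,ε_{n-1} ∈ {0,1} be defined so that ε_1+...+ε_j = j+1−m_j for all j, and let A be the companion-type matrix with first row (−f_0, −f_1, ..., −f_{n-1}) and subdiagonal entries t^{−ε_1}, ..., t^{−ε_{n-1}}, all other entries zero. Then for each j with 1 ≤ j ≤ n, the characteristic coefficient satisfies c_j(tA) = t^{m_{j-1}} f_{j-1}. -/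

import Mathlib

open Matrix

section Aux
open Polynomial

set_option maxRecDepth 8000 in
lemma compMat_charpoly {R : Type*} [CommRing R] :
    ∀ (n : ℕ) (b d : ℕ → R),
    (Matrix.of fun i j : Fin n =>
        if (i : ℕ) = 0 then b (j : ℕ)
        else if (i : ℕ) = (j : ℕ) + 1 then d ((j : ℕ) + 1) else 0).charpoly
      = X ^ n - ∑ j : Fin n,
          C (b (j : ℕ) * ∏ l ∈ Finset.Icc 1 (j : ℕ), d l) * X ^ (n - 1 - (j : ℕ)) := by
  intro n
  induction n with
  | zero => intro b d; simp [Matrix.charpoly]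
  | succ n ih =>
    intro b d
    rcases n with _ | n
    · simp [Matrix.charpoly, Matrix.det_fin_one, charmatrix_apply_eq]
    set N := n + 1 with hN
    set M : Matrix (Fin (N + 1)) (Fin (N + 1)) R := Matrix.of fun i j =>
        if (i : ℕ) = 0 then b (j : ℕ)
        else if (i : ℕ) = (j : ℕ) + 1 then d ((j : ℕ) + 1) else 0 with hM
    have hlast : ((Fin.last N : Fin (N+1)) : ℕ) = N := rfl
    have h0last : (0 : Fin (N+1)) ≠ Fin.last N := by
      simp [Fin.ext_iff, hN]
    have hcol : ∀ i : Fin (N+1), i ≠ 0 → i ≠ Fin.last N →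
        (charmatrix M) i (Fin.last N) = 0 := by
      intro i hi0 hil
      rw [charmatrix_apply_ne _ _ _ hil]
      have : M i (Fin.last N) = 0 := by
        simp only [hM, Matrix.of_apply]
        rw [if_neg, if_neg]
        · intro h; exact hil (Fin.ext (by omega))
        · intro h; exact hi0 (Fin.ext h)
      rw [this, map_zero, neg_zero]
    rw [Matrix.charpoly, Matrix.det_succ_column _ (Fin.last N)]
    conv_lhs => rw [show (Finset.univ : Finset (Fin (N+1))) = insert 0 (insert (Fin.last N)
        ((Finset.univ : Finset (Fin (N+1))) \ {0, Fin.last N})) from by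
      ext i; by_cases h1 : i = 0 <;> by_cases h2 : i = Fin.last N <;> simp [h1, h2]]
    rw [Finset.sum_insert (by simp [h0last]), Finset.sum_insert (by simp)]
    rw [Finset.sum_eq_zero (fun i hi => by
      simp only [Finset.mem_sdiff, Finset.mem_insert, Finset.mem_singleton] at hi
      push_neg at hi
      rw [hcol i hi.2.1 hi.2.2]; ring), add_zero]
    have e0 : (charmatrix M) 0 (Fin.last N) = -C (b N) := by
      rw [charmatrix_apply_ne _ _ _ h0last]
      simp [hM, Fin.val_last]
    have el : (charmatrix M) (Fin.last N) (Fin.last N) = X := by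
      rw [charmatrix_apply_eq]
      have : M (Fin.last N) (Fin.last N) = 0 := by
        simp only [hM, Matrix.of_apply, hlast]
        rw [if_neg (by omega), if_neg (by omega)]
      rw [this, map_zero, sub_zero]
    have m0 : ((charmatrix M).submatrix (Fin.succAbove 0) (Fin.succAbove (Fin.last N))).det
        = (-1) ^ N * C (∏ l ∈ Finset.Icc 1 N, d l) := by
      rw [Matrix.det_of_upperTriangular]
      · have hdiag : ∀ i : Fin N, ((charmatrix M).submatrix (Fin.succAbove 0)
            (Fin.succAbove (Fin.last N))) i i = -(C (d ((i : ℕ) + 1))) := by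
          intro i
          rw [Matrix.submatrix_apply, Fin.succAbove_zero, Fin.succAbove_last]
          rw [charmatrix_apply_ne _ _ _ (by
            intro hh; have := congrArg Fin.val hh
            simp only [Fin.val_succ, Fin.coe_castSucc] at this; omega)]
          simp [hM, Fin.val_succ, Fin.coe_castSucc]
        rw [Finset.prod_congr rfl fun i _ => hdiag i,
          Finset.prod_congr rfl (fun (i : Fin N) (_ : i ∈ Finset.univ) =>
            (neg_one_mul (C (d ((i : ℕ) + 1)))).symm),
          Finset.prod_mul_distrib, Finset.prod_const]
        simp only [Finset.card_univ, Fintype.card_fin]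
        congr 1
        rw [← map_prod]
        congr 1
        rw [← Finset.Ico_add_one_right_eq_Icc, Finset.prod_Ico_eq_prod_range, Fin.prod_univ_eq_prod_range (fun i => d (i + 1)) N]
        simp [add_comm]
      · intro i j hij
        have hij' : (j : ℕ) < (i : ℕ) := hij
        rw [Matrix.submatrix_apply, Fin.succAbove_zero, Fin.succAbove_last]
        rw [charmatrix_apply_ne _ _ _ (by
          intro hh; have := congrArg Fin.val hh
          simp only [Fin.val_succ, Fin.coe_castSucc] at this; omega)]
        have : M (Fin.succ i) (Fin.castSucc j) = 0 := by
          simp only [hM, Matrix.of_apply, Fin.val_succ, Fin.coe_castSucc]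
          rw [if_neg (by omega), if_neg (by omega)]
        rw [this, map_zero, neg_zero]
    have ml : ((charmatrix M).submatrix (Fin.succAbove (Fin.last N))
          (Fin.succAbove (Fin.last N))) =
        charmatrix (Matrix.of fun i j : Fin N =>
          if (i : ℕ) = 0 then b (j : ℕ)
          else if (i : ℕ) = (j : ℕ) + 1 then d ((j : ℕ) + 1) else 0) := by
      ext i j
      rw [Matrix.submatrix_apply, Fin.succAbove_last]
      by_cases h : i = j
      · subst h
        rw [charmatrix_apply_eq, charmatrix_apply_eq]
        simp [hM, Fin.coe_castSucc]
      · rw [charmatrix_apply_ne _ _ _ (fun hv => h (by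
            exact Fin.ext (by simpa [Fin.coe_castSucc] using congrArg Fin.val hv))),
          charmatrix_apply_ne _ _ _ h]
        simp [hM, Fin.coe_castSucc]
    rw [e0, el, m0, ml, ← Matrix.charpoly, ih]
    conv_rhs => rw [Fin.sum_univ_castSucc]
    simp only [Fin.coe_castSucc, hlast, Fin.val_zero, Nat.sub_self, pow_zero, mul_one,
      zero_add, Nat.add_sub_cancel]
    have hsum : X * ∑ j : Fin N, C (b (j:ℕ) * ∏ l ∈ Finset.Icc 1 (j:ℕ), d l) * X ^ (N - 1 - (j:ℕ))
        = ∑ j : Fin N, C (b (j:ℕ) * ∏ l ∈ Finset.Icc 1 (j:ℕ), d l) * X ^ (N - (j:ℕ)) := by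
      rw [Finset.mul_sum]
      refine Finset.sum_congr rfl fun j _ => ?_
      rw [mul_left_comm, ← pow_succ']
      congr 2
      have := j.is_lt
      omega
    have he : Even (N + N) := ⟨N, rfl⟩
    rw [he.neg_one_pow, one_mul, mul_sub, hsum, ← pow_succ']
    have h1 : (-1:R[X])^N * -C (b N) * ((-1)^N * C (∏ l ∈ Finset.Icc 1 N, d l))
        = -(C (b N) * C (∏ l ∈ Finset.Icc 1 N, d l)) := by
      have hs : ((-1:R[X])^N) * ((-1)^N) = 1 := by rw [← pow_add]; exact he.neg_one_pow
      calc (-1:R[X])^N * -C (b N) * ((-1)^N * C (∏ l ∈ Finset.Icc 1 N, d l))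
          = ((-1:R[X])^N * (-1)^N) * (-(C (b N) * C (∏ l ∈ Finset.Icc 1 N, d l))) := by ring
        _ = _ := by rw [hs, one_mul]
    rw [h1, ← C_mul]
    ring

lemma prod_single_one (s : Finset ℕ) (g : ℕ → ℤ) :
    ∏ l ∈ s, (HahnSeries.single (g l) (1 : ℂ) : LaurentSeries ℂ)
      = HahnSeries.single (∑ l ∈ s, g l) 1 := by
  classical
  induction s using Finset.induction with
  | empty => simp
  | insert _ _ h ih =>
    rw [Finset.prod_insert h, Finset.sum_insert h, ih, HahnSeries.single_mul_single, one_mul]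

end Aux

/-- Companion matrix computation over `𝒦 = ℂ((t))` (Laurent series). Fix a partition
`n = n_1 + ... + n_k` with associated nondecreasing sequence `m_0 ≤ ... ≤ m_{n-1}`
(rearrangement of `{1,...,n_1} ∪ ... ∪ {1,...,n_k}`). Given `f_0, ..., f_{n-1} ∈ 𝒪 = ℂ[[t]]`
and `ε_1, ..., ε_{n-1} ∈ {0,1}` with `ε_1 + ... + ε_j = j + 1 - m_j`, let `A` be the
companion-type matrix with first row `(-f_0, ..., -f_{n-1})`, subdiagonal entries
`t^{-ε_1}, ..., t^{-ε_{n-1}}`, and zeros elsewhere. Then the `j`-th characteristic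
coefficient (of `λ^{n-j}` in `det(λI - tA)`) satisfies `c_j(tA) = t^{m_{j-1}} f_{j-1}`. -/
theorem companion_charCoeff (k n : ℕ) (nn : Fin k → ℕ) (hn : ∀ a, 0 < nn a)
    (hsum : ∑ a, nn a = n) (hnpos : 1 ≤ n)
    (m : List ℕ)
    (hm : m = Multiset.sort
      (Finset.univ.val.bind fun a : Fin k => Multiset.map (· + 1) (Multiset.range (nn a))) (· ≤ ·))
    (f : Fin n → PowerSeries ℂ)
    (ε : ℕ → ℕ)
    (hε : ∀ i, 1 ≤ i → i ≤ n - 1 →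
      ε i ≤ 1 ∧ (∑ l ∈ Finset.Icc 1 i, ε l) + m.getD i 0 = i + 1)
    (A : Matrix (Fin n) (Fin n) (LaurentSeries ℂ))
    (hA : A = Matrix.of fun i j : Fin n =>
      if (i : ℕ) = 0 then -(HahnSeries.ofPowerSeries ℤ ℂ (f j))
      else if (i : ℕ) = (j : ℕ) + 1 then HahnSeries.single (-(ε ((j : ℕ) + 1)) : ℤ) 1
      else 0) :
    ∀ j, 1 ≤ j → (hjn : j ≤ n) →
      ((HahnSeries.single (1 : ℤ) (1 : ℂ) : LaurentSeries ℂ) • A).charpoly.coeff (n - j) =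
        HahnSeries.single ((m.getD (j - 1) 0 : ℤ)) 1 *
          HahnSeries.ofPowerSeries ℤ ℂ (f ⟨j - 1, by omega⟩) := by
  intro j hj1 hjn
  classical
  -- m₀ = 1
  have hm0 : m.getD 0 0 = 1 := by
    have hk : 0 < k := by
      rcases Nat.eq_zero_or_pos k with hk0 | hk
      · subst hk0; simp at hsum; omega
      · exact hk
    set M : Multiset ℕ :=
      Finset.univ.val.bind fun a : Fin k => Multiset.map (· + 1) (Multiset.range (nn a)) with hMdef
    have hone : (1 : ℕ) ∈ M := by
      rw [hMdef, Multiset.mem_bind]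
      refine ⟨⟨0, hk⟩, by simp, ?_⟩
      rw [Multiset.mem_map]
      exact ⟨0, by simp [hn ⟨0, hk⟩], rfl⟩
    have hge : ∀ x ∈ M, 1 ≤ x := by
      intro x hx
      rw [hMdef, Multiset.mem_bind] at hx
      obtain ⟨a, -, hx⟩ := hx
      rw [Multiset.mem_map] at hx
      obtain ⟨y, -, rfl⟩ := hx
      omega
    have hsorted : m.Pairwise (· ≤ ·) := hm ▸ Multiset.pairwise_sort _ _
    have honem : (1 : ℕ) ∈ m := by rw [hm]; rwa [Multiset.mem_sort]
    have hallm : ∀ x ∈ m, 1 ≤ x := by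
      intro x hx; apply hge; rw [hm, Multiset.mem_sort] at hx; exact hx
    rcases m with - | ⟨x, t⟩
    · simp at honem
    · have hx1 : 1 ≤ x := hallm x List.mem_cons_self
      have hx2 : x ≤ 1 := by
        rcases List.mem_cons.mp honem with h | h
        · omega
        · exact (List.pairwise_cons.mp hsorted).1 1 h
      simpa using by omega
  -- set up b, d
  set b : ℕ → LaurentSeries ℂ := fun l =>
    if h : l < n then
      (HahnSeries.single (1 : ℤ) (1 : ℂ) : LaurentSeries ℂ) *
        (-(HahnSeries.ofPowerSeries ℤ ℂ (f ⟨l, h⟩)))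
    else 0 with hb
  set d : ℕ → LaurentSeries ℂ := fun l =>
    HahnSeries.single ((1 : ℤ) - (ε l : ℤ)) 1 with hd
  have hAt : ((HahnSeries.single (1 : ℤ) (1 : ℂ) : LaurentSeries ℂ) • A)
      = Matrix.of fun i j : Fin n =>
        if (i : ℕ) = 0 then b (j : ℕ)
        else if (i : ℕ) = (j : ℕ) + 1 then d ((j : ℕ) + 1) else 0 := by
    subst hA
    ext i jj : 2
    simp only [Matrix.smul_apply, Matrix.of_apply, smul_eq_mul]
    by_cases h0 : (i : ℕ) = 0
    · rw [if_pos h0, if_pos h0]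
      simp only [hb]
      rw [dif_pos jj.isLt]
    · rw [if_neg h0, if_neg h0]
      by_cases h1 : (i : ℕ) = (jj : ℕ) + 1
      · rw [if_pos h1, if_pos h1, hd, HahnSeries.single_mul_single, one_mul]
        norm_num
        rfl
      · rw [if_neg h1, if_neg h1, mul_zero]
  rw [hAt, compMat_charpoly n b d]
  have hjlt : j - 1 < n := by omega
  have hnj : n - j < n := by omega
  rw [Polynomial.coeff_sub, Polynomial.coeff_X_pow, if_neg (by omega),
    Polynomial.finset_sum_coeff]
  rw [Finset.sum_eq_single (⟨j - 1, hjlt⟩ : Fin n)]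
  · rw [Polynomial.coeff_C_mul, Polynomial.coeff_X_pow, if_pos (by simp; omega), mul_one]
    rw [zero_sub]
    have hbv : b (j - 1) = (HahnSeries.single (1 : ℤ) (1 : ℂ) : LaurentSeries ℂ) *
        (-(HahnSeries.ofPowerSeries ℤ ℂ (f ⟨j - 1, hjlt⟩))) := by
      simp only [hb]
      rw [dif_pos hjlt]
    have hdv : ∏ l ∈ Finset.Icc 1 (j - 1), d l
        = HahnSeries.single (∑ l ∈ Finset.Icc 1 (j - 1), ((1 : ℤ) - (ε l : ℤ))) 1 := by
      rw [hd, prod_single_one]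
    have hexp : (1 : ℤ) + ∑ l ∈ Finset.Icc 1 (j - 1), ((1 : ℤ) - (ε l : ℤ))
        = (m.getD (j - 1) 0 : ℤ) := by
      rw [Finset.sum_sub_distrib, Finset.sum_const, Nat.card_Icc]
      simp only [nsmul_eq_mul, mul_one]
      rcases Nat.eq_or_lt_of_le hj1 with h1 | h2
      · have e0 : ((m.getD 0 0 : ℕ) : ℤ) = 1 := by rw [hm0]; norm_num
        rw [← h1]
        norm_num
        rw [← List.getD_eq_getElem?_getD, hm0]
        norm_num
      · have := (hε (j - 1) (by omega) (by omega)).2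
        have hcast : ((∑ l ∈ Finset.Icc 1 (j - 1), ε l : ℕ) : ℤ)
            + (m.getD (j - 1) 0 : ℤ) = ((j - 1 : ℕ) : ℤ) + 1 := by
          exact_mod_cast congrArg (Nat.cast : ℕ → ℤ) this
        push_cast at hcast ⊢
        omega

    rw [hbv, hdv]
    rw [show ∀ x y z : LaurentSeries ℂ, -(x * -y * z) = x * z * y from fun x y z => by ring]
    rw [HahnSeries.single_mul_single, one_mul, hexp]
  · intro i _ hne
    rw [Polynomial.coeff_C_mul, Polynomial.coeff_X_pow, if_neg, mul_zero]
    intro hcontra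
    apply hne
    have hi := i.isLt
    exact Fin.ext (show (i : ℕ) = j - 1 by omega)
  · intro habs
    exact absurd (Finset.mem_univ _) habs
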